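/- Let $\omega_1,\dots,\omega_n > 0$ and fix $x \in \mathbb{R}^n$ with $\|x\|_\omega^2 := \sum_i \omega_i^2 x_i^2 < 1$. For $\xi \neq 0$ let $z_\pm(x,\xi)$ be the intersections of the ellipsoid $\{z : \|z\|_\omega = 1\}$ with the rays $\{x + t\xi : t > 0\}$ and $\{x + t\xi : t < 0\}$ respectively. Then for every $k \geq 1$ the function $\xi \mapsto J_k(x,\xi) = \frac{|\xi|^k}{|x - z_+(x,\xi)|^k} + (-1)^k \frac{|\xi|^k}{|x - z_-(x,\xi)|^k}$ is the restriction to $\mathbb{R}^n \setminus \{0\}$ of a polynomial in $\xi = (\xi_1,\dots,\xi_n)$ of degree at most $k$. -/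

import Mathlib

/-- Scaled inner product `⟨x,y⟩_ω = ∑ i, ω_i² x_i y_i`. -/
noncomputable def wip {n : ℕ} (ω x y : Fin n → ℝ) : ℝ := ∑ i, (ω i) ^ 2 * x i * y i

/-- The Euclidean norm on `Fin n → ℝ`. -/
noncomputable def euclNorm {n : ℕ} (x : Fin n → ℝ) : ℝ := Real.sqrt (∑ i, (x i) ^ 2)

lemma wip_expand {n : ℕ} (ω x ξ : Fin n → ℝ) (t : ℝ) :
    wip ω (x + t • ξ) (x + t • ξ) = wip ω x x + 2*t*wip ω x ξ + t^2 * wip ω ξ ξ := by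
  simp only [wip, Pi.add_apply, Pi.smul_apply, smul_eq_mul, Finset.mul_sum]
  rw [← Finset.sum_add_distrib, ← Finset.sum_add_distrib]
  exact Finset.sum_congr rfl fun i _ => by ring

lemma euclNorm_smul' {n : ℕ} (t : ℝ) (ξ : Fin n → ℝ) : euclNorm (t • ξ) = |t| * euclNorm ξ := by
  simp only [euclNorm, Pi.smul_apply, smul_eq_mul, mul_pow, ← Finset.mul_sum]
  rw [Real.sqrt_mul (sq_nonneg t), Real.sqrt_sq_eq_abs]

lemma euclNorm_pos {n : ℕ} {ξ : Fin n → ℝ} (h : ξ ≠ 0) : 0 < euclNorm ξ := by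
  apply Real.sqrt_pos.2
  obtain ⟨i, hi⟩ := Function.ne_iff.1 h
  refine Finset.sum_pos' (fun j _ => sq_nonneg _) ⟨i, Finset.mem_univ i, ?_⟩
  have : ξ i ≠ 0 := by simpa using hi
  positivity

lemma wip_pos {n : ℕ} {ω ξ : Fin n → ℝ} (hω : ∀ i, 0 < ω i) (h : ξ ≠ 0) :
    0 < wip ω ξ ξ := by
  obtain ⟨i, hi⟩ := Function.ne_iff.1 h
  have hi' : ξ i ≠ 0 := by simpa using hi
  refine Finset.sum_pos' (fun j _ => by nlinarith [sq_nonneg (ω j * ξ j)])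
    ⟨i, Finset.mem_univ i, ?_⟩
  rw [mul_assoc]
  exact mul_pos (pow_pos (hω i) 2) (mul_self_pos.2 hi')

theorem stmt6 {n : ℕ} (ω x : Fin n → ℝ) (hω : ∀ i, 0 < ω i) (hx : wip ω x x < 1)
    (k : ℕ) (hk : 1 ≤ k) (zp zm : (Fin n → ℝ) → (Fin n → ℝ))
    (hzp : ∀ ξ : Fin n → ℝ, ξ ≠ 0 →
      (∃ t > (0:ℝ), zp ξ = x + t • ξ) ∧ wip ω (zp ξ) (zp ξ) = 1)
    (hzm : ∀ ξ : Fin n → ℝ, ξ ≠ 0 →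
      (∃ t < (0:ℝ), zm ξ = x + t • ξ) ∧ wip ω (zm ξ) (zm ξ) = 1) :
    ∃ p : MvPolynomial (Fin n) ℝ, p.totalDegree ≤ k ∧
      ∀ ξ : Fin n → ℝ, ξ ≠ 0 →
        euclNorm ξ ^ k / euclNorm (x - zp ξ) ^ k +
          (-1 : ℝ) ^ k * (euclNorm ξ ^ k / euclNorm (x - zm ξ) ^ k) =
            MvPolynomial.eval ξ p := by
  classical
  set c : ℝ := wip ω x x with hc0
  have hc : (0:ℝ) < 1 - c := by linarith
  set Bp : MvPolynomial (Fin n) ℝ :=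
    ∑ i, MvPolynomial.C ((ω i)^2 * x i) * MvPolynomial.X i with hBp
  set Qp : MvPolynomial (Fin n) ℝ :=
    ∑ i, MvPolynomial.C ((ω i)^2) * (MvPolynomial.X i)^2 with hQp
  set Dp : MvPolynomial (Fin n) ℝ := Bp^2 + MvPolynomial.C (1 - c) * Qp with hDp
  refine ⟨MvPolynomial.C (((1-c)^k)⁻¹) * ∑ j ∈ Finset.range (k+1),
      MvPolynomial.C ((1 + (-1:ℝ)^(k-j)) * (k.choose j)) * Bp^j * Dp^((k-j)/2), ?_, ?_⟩
  · -- degree bound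
    have hB : Bp.totalDegree ≤ 1 := by
      refine le_trans (MvPolynomial.totalDegree_finset_sum _ _) ?_
      refine Finset.sup_le fun i _ => ?_
      refine le_trans (MvPolynomial.totalDegree_mul _ _) ?_
      rw [MvPolynomial.totalDegree_C, MvPolynomial.totalDegree_X]
    have hQ : Qp.totalDegree ≤ 2 := by
      refine le_trans (MvPolynomial.totalDegree_finset_sum _ _) ?_
      refine Finset.sup_le fun i _ => ?_
      refine le_trans (MvPolynomial.totalDegree_mul _ _) ?_
      have := MvPolynomial.totalDegree_pow (MvPolynomial.X (R := ℝ) i) 2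
      simp only [MvPolynomial.totalDegree_C, zero_add]
      exact le_trans this (by simp [MvPolynomial.totalDegree_X])
    have hD : Dp.totalDegree ≤ 2 := by
      refine le_trans (MvPolynomial.totalDegree_add _ _) (max_le ?_ ?_)
      · exact le_trans (MvPolynomial.totalDegree_pow _ _) (by omega)
      · refine le_trans (MvPolynomial.totalDegree_mul _ _) ?_
        rw [MvPolynomial.totalDegree_C, zero_add]; exact hQ
    refine le_trans (MvPolynomial.totalDegree_mul _ _) ?_
    rw [MvPolynomial.totalDegree_C, zero_add]
    refine le_trans (MvPolynomial.totalDegree_finset_sum _ _) ?_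
    refine Finset.sup_le fun j hj => ?_
    have hjk : j ≤ k := by
      have := Finset.mem_range.1 hj; omega
    refine le_trans (MvPolynomial.totalDegree_mul _ _) ?_
    have h1 : (MvPolynomial.C ((1 + (-1:ℝ)^(k-j)) * (k.choose j)) * Bp^j).totalDegree ≤ j := by
      refine le_trans (MvPolynomial.totalDegree_mul _ _) ?_
      rw [MvPolynomial.totalDegree_C, zero_add]
      exact le_trans (MvPolynomial.totalDegree_pow _ _) (by nlinarith)
    have h2 : (Dp^((k-j)/2)).totalDegree ≤ ((k-j)/2) * 2 := by
      refine le_trans (MvPolynomial.totalDegree_pow _ _) ?_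
      exact Nat.mul_le_mul_left _ hD
    have : j + ((k-j)/2) * 2 ≤ k := by omega
    omega
  · intro ξ hξ
    obtain ⟨⟨tp, htp, hzp1⟩, hzp2⟩ := hzp ξ hξ
    obtain ⟨⟨tm, htm, hzm1⟩, hzm2⟩ := hzm ξ hξ
    set B : ℝ := wip ω x ξ with hBdef
    set Q : ℝ := wip ω ξ ξ with hQdef
    have hQpos : 0 < Q := wip_pos hω hξ
    set Δ : ℝ := B^2 + (1-c)*Q with hΔdef
    have hΔpos : 0 < Δ := by nlinarith [sq_nonneg B]
    set S : ℝ := Real.sqrt Δ with hSdef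
    have hS2 : S^2 = Δ := Real.sq_sqrt hΔpos.le
    have hSB : |B| < S := by
      have h1 : Real.sqrt (B^2) < S := by
        apply Real.sqrt_lt_sqrt (sq_nonneg B)
        nlinarith
      simpa [Real.sqrt_sq_eq_abs] using h1
    -- quadratic identity for inverse parameter
    have hquad : ∀ t : ℝ, t ≠ 0 → (1:ℝ) = c + 2*t*B + t^2*Q →
        ((1-c)*t⁻¹ - B)^2 = S^2 := by
      intro t ht h
      rw [hS2, hΔdef]
      have ht2 : t^2 ≠ 0 := pow_ne_zero _ ht
      have key : ((1-c)*t⁻¹ - B)^2 * t^2 = (B^2 + (1-c)*Q) * t^2 := by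
        field_simp
        linear_combination (1-c) * h
      exact mul_right_cancel₀ ht2 key
    have hexp_p : (1:ℝ) = c + 2*tp*B + tp^2*Q := by
      have := wip_expand ω x ξ tp
      rw [← hzp1, hzp2] at this
      linarith [this]
    have hexp_m : (1:ℝ) = c + 2*tm*B + tm^2*Q := by
      have := wip_expand ω x ξ tm
      rw [← hzm1, hzm2] at this
      linarith [this]
    have hsp : (1-c)*tp⁻¹ - B = S := by
      have h2 := hquad tp (ne_of_gt htp) hexp_p
      have hfac : (((1-c)*tp⁻¹ - B) - S) * (((1-c)*tp⁻¹ - B) + S) = 0 := by linear_combination h2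
      rcases mul_eq_zero.1 hfac with h | h
      · linarith [sub_eq_zero.1 h]
      · exfalso
        have h1 : 0 < (1-c)*tp⁻¹ := mul_pos hc (inv_pos.2 htp)
        have h3 : B < S := lt_of_le_of_lt (le_abs_self B) hSB
        linarith
    have hsm : (1-c)*tm⁻¹ - B = -S := by
      have h2 := hquad tm (ne_of_lt htm) hexp_m
      have hfac : (((1-c)*tm⁻¹ - B) - S) * (((1-c)*tm⁻¹ - B) + S) = 0 := by linear_combination h2
      rcases mul_eq_zero.1 hfac with h | h
      · exfalso
        have h1 : (1-c)*tm⁻¹ < 0 := mul_neg_of_pos_of_neg hc (inv_neg''.2 htm)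
        have h3 : -B < S := lt_of_le_of_lt (neg_le_abs B) hSB
        have := sub_eq_zero.1 h
        linarith
      · linarith
    have hsp' : tp⁻¹ = (B + S) / (1-c) := by
      rw [eq_div_iff (ne_of_gt hc)]; linarith
    have hsm' : tm⁻¹ = (B - S) / (1-c) := by
      rw [eq_div_iff (ne_of_gt hc)]; linarith
    -- norms
    have he : euclNorm ξ ≠ 0 := ne_of_gt (euclNorm_pos hξ)
    have hnp : euclNorm (x - zp ξ) = tp * euclNorm ξ := by
      have hxe : x - zp ξ = (-tp) • ξ := by rw [hzp1]; module
      rw [hxe, euclNorm_smul', abs_neg, abs_of_pos htp]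
    have hnm : euclNorm (x - zm ξ) = (-tm) * euclNorm ξ := by
      have hxe : x - zm ξ = (-tm) • ξ := by rw [hzm1]; module
      rw [hxe, euclNorm_smul', abs_neg, abs_of_neg htm]
    have htpne : tp ≠ 0 := ne_of_gt htp
    have htmne : tm ≠ 0 := ne_of_lt htm
    have hL1 : euclNorm ξ ^ k / euclNorm (x - zp ξ) ^ k = (tp⁻¹)^k := by
      rw [hnp, mul_pow]
      field_simp
      rw [← mul_pow, mul_one_div_cancel htpne, one_pow]
    have hL2 : (-1:ℝ)^k * (euclNorm ξ ^ k / euclNorm (x - zm ξ) ^ k) = (tm⁻¹)^k := by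
      have hmt : (-tm) ≠ 0 := by linarith
      rw [hnm, mul_pow]
      rw [show euclNorm ξ ^ k / ((-tm)^k * euclNorm ξ ^ k) = ((-tm)⁻¹)^k by
        rw [inv_pow]; field_simp]
      rw [inv_neg, ← mul_pow]
      congr 1
      ring
    rw [hL1, hL2]
    -- evaluate the polynomial
    have hevalB : MvPolynomial.eval ξ Bp = B := by
      simp only [hBp, map_sum, map_mul, MvPolynomial.eval_C, MvPolynomial.eval_X, hBdef, wip]
      try exact Finset.sum_congr rfl fun i _ => by ring
    have hevalQ : MvPolynomial.eval ξ Qp = Q := by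
      simp only [hQp, map_sum, map_mul, map_pow, MvPolynomial.eval_C, MvPolynomial.eval_X,
        hQdef, wip]
      try exact Finset.sum_congr rfl fun i _ => by ring
    have hevalD : MvPolynomial.eval ξ Dp = Δ := by
      simp only [hDp, map_add, map_mul, map_pow, MvPolynomial.eval_C, hevalB, hevalQ, hΔdef]
    have hevalp : MvPolynomial.eval ξ (MvPolynomial.C (((1-c)^k)⁻¹) * ∑ j ∈ Finset.range (k+1),
        MvPolynomial.C ((1 + (-1:ℝ)^(k-j)) * (k.choose j)) * Bp^j * Dp^((k-j)/2)) =
        ((1-c)^k)⁻¹ * ∑ j ∈ Finset.range (k+1),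
          (1 + (-1:ℝ)^(k-j)) * (k.choose j) * B^j * Δ^((k-j)/2) := by
      simp only [map_mul, map_sum, map_pow, MvPolynomial.eval_C, hevalB, hevalD]
    rw [hevalp]
    have key : (B+S)^k + (B-S)^k = ∑ j ∈ Finset.range (k+1),
        (1 + (-1:ℝ)^(k-j)) * (k.choose j) * B^j * Δ^((k-j)/2) := by
      have h1 : (B+S)^k = ∑ j ∈ Finset.range (k+1), B^j * S^(k-j) * (k.choose j) :=
        add_pow B S k
      have h2 : (B-S)^k = ∑ j ∈ Finset.range (k+1), B^j * (-S)^(k-j) * (k.choose j) := by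
        rw [sub_eq_add_neg]; exact add_pow B (-S) k
      rw [h1, h2, ← Finset.sum_add_distrib]
      refine Finset.sum_congr rfl fun j hj => ?_
      rcases Nat.even_or_odd (k - j) with hev | hod
      · obtain ⟨m, hm⟩ := hev
        have hdiv : (k-j)/2 = m := by omega
        have hSpow : S^(k-j) = Δ^m := by
          rw [hm, ← two_mul, pow_mul, hS2]
        have hneg1 : (-1:ℝ)^(k-j) = 1 := (Even.neg_one_pow ⟨m, hm⟩)
        rw [Even.neg_pow ⟨m, hm⟩, hSpow, hdiv, hneg1]
        ring
      · rw [Odd.neg_pow hod, Odd.neg_one_pow hod]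
        ring
    rw [← key, hsp', hsm', div_pow, div_pow]
    field_simp
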